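/- Under the generalized scaling law σ⁻¹(ṽ(θ,e)) = α(θ) + β(θ)·log(1+e) with β(θ) > 0 strictly increasing in θ and α(θ) weakly increasing in θ, the single-crossing condition C3 holds: for θ' > θ, the effort gap e_req(s; θ) − e_req(s; θ'), where e_req(s; θ) := inf{e ≥ 0 : ṽ(θ,e) ≥ s}, is weakly nondecreasing in the target score s (on the range of scores attainable from zero effort by both models). -/

import Mathlib

/-- The standard logistic function `σ(x) = 1/(1+e^{-x})`. -/
noncomputable def logistic (x : ℝ) : ℝ := (1 + Real.exp (-x))⁻¹

/-- Minimal effort required for a model of capability `θ` to reach score `s`: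
`e_req(s;θ) = inf{e ≥ 0 : v(θ,e) ≥ s}`. -/
noncomputable def ereq (v : ℝ → ℝ → ℝ) (s θ : ℝ) : ℝ :=
  sInf {e | 0 ≤ e ∧ s ≤ v θ e}

lemma logistic_strictMono : StrictMono logistic := by
  intro a b hab
  unfold logistic
  have h1 : 0 < 1 + Real.exp (-b) := by positivity
  have h2 : Real.exp (-b) < Real.exp (-a) := Real.exp_lt_exp.2 (by linarith)
  exact inv_strictAnti₀ h1 (by linarith)

lemma logistic_pos (x : ℝ) : 0 < logistic x := by
  unfold logistic; positivity

lemma logistic_logit {s : ℝ} (h0 : 0 < s) (h1 : s < 1) :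
    logistic (Real.log (s / (1 - s))) = s := by
  unfold logistic
  have hs1 : 0 < 1 - s := by linarith
  have hpos : 0 < s / (1 - s) := by positivity
  rw [← Real.log_inv, Real.exp_log (by positivity)]
  rw [inv_div]
  field_simp
  ring

/-- Explicit formula for `ereq` under the scaling law. -/
lemma ereq_formula (α β : ℝ → ℝ) (hβpos : ∀ θ, 0 < β θ)
    (vt : ℝ → ℝ → ℝ)
    (hvt : ∀ θ e, vt θ e = logistic (α θ + β θ * Real.log (1 + e)))
    (θ s : ℝ) (hs0 : vt θ 0 ≤ s) (hs1 : s < 1) :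
    ereq vt s θ = Real.exp ((Real.log (s / (1 - s)) - α θ) / β θ) - 1 := by
  have hspos : 0 < s := lt_of_lt_of_le (by rw [hvt]; exact logistic_pos _) hs0
  set L := Real.log (s / (1 - s)) with hL
  have hLs : logistic L = s := logistic_logit hspos hs1
  have hb := hβpos θ
  -- s ≥ vt θ 0 = logistic (α θ) gives α θ ≤ L
  have hv0 : vt θ 0 = logistic (α θ) := by
    rw [hvt]; norm_num
  have hαL : α θ ≤ L := by
    by_contra h
    push_neg at h
    have := logistic_strictMono h
    rw [hLs] at this
    rw [hv0] at hs0
    linarith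
  set e₀ := Real.exp ((L - α θ) / β θ) - 1 with he₀
  have he₀nn : 0 ≤ e₀ := by
    rw [he₀]
    have : (1:ℝ) ≤ Real.exp ((L - α θ) / β θ) := by
      rw [← Real.exp_zero]
      exact Real.exp_le_exp.2 (div_nonneg (by linarith) hb.le)
    linarith
  have hmem : e₀ ∈ {e | 0 ≤ e ∧ s ≤ vt θ e} := by
    refine ⟨he₀nn, ?_⟩
    rw [hvt]
    have : (1 : ℝ) + e₀ = Real.exp ((L - α θ) / β θ) := by ring
    rw [this, Real.log_exp]
    have : α θ + β θ * ((L - α θ) / β θ) = L := by field_simp; ring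
    rw [this, hLs]
  have hlb : ∀ e ∈ {e | 0 ≤ e ∧ s ≤ vt θ e}, e₀ ≤ e := by
    rintro e ⟨hen, hse⟩
    rw [hvt] at hse
    have hLle : L ≤ α θ + β θ * Real.log (1 + e) := by
      by_contra h
      push_neg at h
      have := logistic_strictMono h
      rw [hLs] at this
      linarith
    have h1 : (L - α θ) / β θ ≤ Real.log (1 + e) := by
      rw [div_le_iff₀ hb]
      linarith [mul_comm (β θ) (Real.log (1 + e))]
    have h2 : Real.exp ((L - α θ) / β θ) ≤ 1 + e := by
      calc Real.exp ((L - α θ) / β θ) ≤ Real.exp (Real.log (1 + e)) :=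
            Real.exp_le_exp.2 h1
        _ = 1 + e := Real.exp_log (by linarith)
    simpa [he₀] using sub_le_iff_le_add'.2 h2
  refine le_antisymm (csInf_le ⟨e₀, hlb⟩ hmem) (le_csInf ⟨e₀, hmem⟩ hlb)

theorem stmt3 (α β : ℝ → ℝ) (hα : Monotone α) (hβ : StrictMono β)
    (hβpos : ∀ θ, 0 < β θ)
    (vt : ℝ → ℝ → ℝ)
    (hvt : ∀ θ e, vt θ e = logistic (α θ + β θ * Real.log (1 + e)))
    (θ θ' : ℝ) (hθ : θ < θ') :
    ∀ s s', vt θ 0 ≤ s → vt θ' 0 ≤ s → s ≤ s' → s' < 1 →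
      ereq vt s θ - ereq vt s θ' ≤ ereq vt s' θ - ereq vt s' θ' := by
  intro s s' hs hs' hss' hs'1
  have hs1 : s < 1 := lt_of_le_of_lt hss' hs'1
  have hspos : 0 < s := lt_of_lt_of_le (by rw [hvt]; exact logistic_pos _) hs
  have hs'pos : 0 < s' := lt_of_lt_of_le hspos hss'
  have hss'2 : vt θ 0 ≤ s' := le_trans hs hss'
  have hss'3 : vt θ' 0 ≤ s' := le_trans hs' hss'
  rw [ereq_formula α β hβpos vt hvt θ s hs hs1,
      ereq_formula α β hβpos vt hvt θ' s hs' hs1,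
      ereq_formula α β hβpos vt hvt θ s' hss'2 hs'1,
      ereq_formula α β hβpos vt hvt θ' s' hss'3 hs'1]
  set L := Real.log (s / (1 - s)) with hLdef
  set L' := Real.log (s' / (1 - s')) with hL'def
  have hLL' : L ≤ L' := by
    have h1s : (0:ℝ) < 1 - s := by linarith
    have h1s' : (0:ℝ) < 1 - s' := by linarith
    apply Real.log_le_log (by positivity)
    exact div_le_div₀ hs'pos.le hss' (by linarith) (by linarith)
  have hv0 : ∀ t, vt t 0 = logistic (α t) := by
    intro t; rw [hvt]; norm_num
  have hLs : logistic L = s := logistic_logit hspos hs1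
  have hLa' : α θ' ≤ L := by
    have : logistic (α θ') ≤ logistic L := by rw [hLs]; rw [hv0] at hs'; exact hs'
    exact logistic_strictMono.le_iff_le.mp this
  have hLa : α θ ≤ L := le_trans (hα hθ.le) hLa'
  set a := α θ; set a' := α θ'; set b := β θ; set b' := β θ'
  have hb : 0 < b := hβpos θ
  have hb' : 0 < b' := hβpos θ'
  have hbb' : b < b' := hβ hθ
  have haa' : a ≤ a' := hα hθ.le
  set d := L' - L with hd
  have hdnn : 0 ≤ d := by linarith
  have key : Real.exp ((L - a') / b') * (Real.exp (d / b') - 1) ≤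
      Real.exp ((L - a) / b) * (Real.exp (d / b) - 1) := by
    have hLa'nn : (0:ℝ) ≤ L - a' := by linarith
    apply mul_le_mul
    · apply Real.exp_le_exp.2
      calc (L - a') / b' ≤ (L - a') / b := by gcongr
        _ ≤ (L - a) / b := by gcongr <;> linarith
    · have : d / b' ≤ d / b := by gcongr
      linarith [Real.exp_le_exp.2 this]
    · have : (1:ℝ) ≤ Real.exp (d / b') := by
        rw [← Real.exp_zero]; exact Real.exp_le_exp.2 (by positivity)
      linarith
    · positivity
  have e1 : Real.exp ((L' - a) / b) = Real.exp ((L - a) / b) * Real.exp (d / b) := by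
    rw [← Real.exp_add]; congr 1; field_simp; ring
  have e2 : Real.exp ((L' - a') / b') = Real.exp ((L - a') / b') * Real.exp (d / b') := by
    rw [← Real.exp_add]; congr 1; field_simp; ring
  rw [e1, e2]
  nlinarith [key]
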